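/- Let b be a basis of ℝⁿ with ℤ-span L a full-rank lattice, let D be the fundamental parallelepiped of b, and let fract_b(x) ∈ D denote the unique representative of x modulo L lying in D. Then for every nonempty finite set S ⊆ ℝⁿ there exists a fixed dither d ∈ D such that (1/|S|) ∑_{v ∈ S} ‖fract_b(v − d)‖² ≤ (1/vol(D)) ∫_D ‖x‖² dx. In particular, applying this to the scaled basis 2^m·b, a uniform random variable V over any complete set of coset representatives of Λ/2^mΛ admits a fixed dither d with (1/n)·E[‖fract(V − d)‖²] ≤ σ²(2^mΛ), the second moment per dimension of the coarse lattice 2^mΛ. -/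

import Mathlib

open MeasureTheory ZSpan

private lemma fract_measurable {n : ℕ}
    (b : Module.Basis (Fin n) ℝ (EuclideanSpace ℝ (Fin n))) :
    Measurable (ZSpan.fract b) := by
  have h : ZSpan.fract b = fun m => b.equivFun.symm (fun i => Int.fract (b.equivFun m i)) := by
    funext m
    apply b.ext_elem
    intro i
    classical
    simp [ZSpan.repr_fract_apply, Module.Basis.equivFun_apply, Module.Basis.equivFun_symm_apply,
      Finsupp.single_apply, Finset.sum_ite_eq']
  rw [h]
  have h1 : Measurable (b.equivFun.symm : (Fin n → ℝ) → EuclideanSpace ℝ (Fin n)) :=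
    b.equivFun.symm.toContinuousLinearEquiv.continuous.measurable
  have h2 : Measurable (fun m : EuclideanSpace ℝ (Fin n) => fun i => Int.fract (b.equivFun m i)) := by
    refine measurable_pi_lambda _ fun i => measurable_fract.comp ?_
    exact ((LinearMap.continuous_of_finiteDimensional
      (b.equivFun : EuclideanSpace ℝ (Fin n) →ₗ[ℝ] (Fin n → ℝ))).measurable).eval
  exact h1.comp h2

private lemma integral_fract_sub {n : ℕ}
    (b : Module.Basis (Fin n) ℝ (EuclideanSpace ℝ (Fin n))) (v : EuclideanSpace ℝ (Fin n)) :
    ∫ x in ZSpan.fundamentalDomain b, ‖ZSpan.fract b (v - x)‖ ^ 2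
      = ∫ x in ZSpan.fundamentalDomain b, ‖x‖ ^ 2 := by
  let E := EuclideanSpace ℝ (Fin n)
  have hFD : IsAddFundamentalDomain (Submodule.span ℤ (Set.range ⇑b)).toAddSubgroup (ZSpan.fundamentalDomain b) volume :=
    ZSpan.isAddFundamentalDomain' b volume
  -- the homeomorphism x ↦ v - x
  let T : E ≃ₜ E := (Homeomorph.neg E).trans (Homeomorph.addLeft v)
  have hT : ∀ x, T x = v - x := fun x => (sub_eq_add_neg v x).symm
  have hTmp : MeasurePreserving T volume volume :=
    (measurePreserving_add_left volume v).comp (Measure.measurePreserving_neg volume)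
  have hTsymm : MeasurePreserving T.symm volume volume :=
    (Measure.measurePreserving_neg volume).comp (measurePreserving_add_left volume (-v))
  -- T '' D is also a fundamental domain
  have hFD' : IsAddFundamentalDomain (Submodule.span ℤ (Set.range ⇑b)).toAddSubgroup (⇑T '' ZSpan.fundamentalDomain b) volume := by
    refine hFD.image_of_equiv T.toEquiv hTsymm.quasiMeasurePreserving (Equiv.neg (Submodule.span ℤ (Set.range ⇑b)).toAddSubgroup) ?_
    intro g x
    show T ((-g) +ᵥ x) = g +ᵥ T x
    rw [hT, hT]
    show v - ((-(g : E)) + x) = (g : E) + (v - x)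
    abel
  -- periodic function
  have hinv : ∀ (g : (Submodule.span ℤ (Set.range ⇑b)).toAddSubgroup) (x : EuclideanSpace ℝ (Fin n)),
      (fun y => ‖ZSpan.fract b y‖ ^ 2) (g +ᵥ x) = (fun y => ‖ZSpan.fract b y‖ ^ 2) x := by
    intro g x
    simp only
    congr 1
    show ‖ZSpan.fract b ((g : E) + x)‖ = _
    rw [ZSpan.fract_zSpan_add b x g.2]
  haveI : Countable (Submodule.span ℤ (Set.range ⇑b)).toAddSubgroup :=
    inferInstanceAs (Countable (Submodule.span ℤ (Set.range ⇑b)))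
  calc ∫ x in ZSpan.fundamentalDomain b, ‖ZSpan.fract b (v - x)‖ ^ 2
      = ∫ x in ZSpan.fundamentalDomain b, ‖ZSpan.fract b (T x)‖ ^ 2 := by
        simp_rw [hT]
    _ = ∫ y in ⇑T '' ZSpan.fundamentalDomain b, ‖ZSpan.fract b y‖ ^ 2 := by
        rw [hTmp.setIntegral_image_emb T.measurableEmbedding]
    _ = ∫ y in ZSpan.fundamentalDomain b, ‖ZSpan.fract b y‖ ^ 2 :=
        hFD'.setIntegral_eq hFD hinv
    _ = ∫ x in ZSpan.fundamentalDomain b, ‖x‖ ^ 2 := by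
        refine setIntegral_congr_fun (ZSpan.fundamentalDomain_measurableSet b) fun x hx => ?_
        rw [ZSpan.fract_eq_self.mpr hx]

/-- **Existence of a good fixed dither (Lemma B.2 of the thesis).**
Let `b` be a basis of `ℝⁿ` with `ℤ`-span a full-rank lattice, let `D` be the fundamental
parallelepiped of `b`, and let `fract b x ∈ D` denote the representative of `x` modulo the
lattice lying in `D`.  Then for every nonempty finite set `S ⊆ ℝⁿ` there exists a fixed
dither `d ∈ D` such that
`(1/|S|) ∑_{v ∈ S} ‖fract b (v − d)‖² ≤ (1/vol D) ∫_D ‖x‖² dx`. -/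
theorem exists_good_dither {n : ℕ}
    (b : Module.Basis (Fin n) ℝ (EuclideanSpace ℝ (Fin n)))
    (S : Finset (EuclideanSpace ℝ (Fin n))) (hS : S.Nonempty) :
    ∃ d ∈ ZSpan.fundamentalDomain b,
      (S.card : ℝ)⁻¹ * ∑ v ∈ S, ‖ZSpan.fract b (v - d)‖ ^ 2
        ≤ (volume (ZSpan.fundamentalDomain b)).toReal⁻¹ *
            ∫ x in ZSpan.fundamentalDomain b, ‖x‖ ^ 2 := by
  set D := ZSpan.fundamentalDomain b
  have hD0 : volume D ≠ 0 := ZSpan.measure_fundamentalDomain_ne_zero b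
  have hDtop : volume D ≠ ⊤ :=
    (Bornology.IsBounded.measure_lt_top (ZSpan.fundamentalDomain_isBounded b)).ne
  -- integrability of each term
  have hint : ∀ v : EuclideanSpace ℝ (Fin n),
      IntegrableOn (fun d => ‖ZSpan.fract b (v - d)‖ ^ 2) D volume := by
    intro v
    refine Measure.integrableOn_of_bounded (M := (∑ i, ‖b i‖) ^ 2) hDtop ?_ ?_
    · exact (((fract_measurable b).comp (measurable_const.sub measurable_id)).norm.pow
        measurable_const).aestronglyMeasurable
    · refine Filter.Eventually.of_forall fun d => ?_
      rw [Real.norm_eq_abs, abs_of_nonneg (by positivity)]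
      have h1 : ‖ZSpan.fract b (v - d)‖ ≤ ∑ i, ‖b i‖ := ZSpan.norm_fract_le b _
      calc ‖ZSpan.fract b (v - d)‖ ^ 2 ≤ (∑ i, ‖b i‖) ^ 2 := by
            apply pow_le_pow_left₀ (norm_nonneg _) h1
        _ ≤ (∑ i, ‖b i‖) ^ 2 := le_rfl
  have hintS : IntegrableOn (fun d => ∑ v ∈ S, ‖ZSpan.fract b (v - d)‖ ^ 2) D volume :=
    integrable_finset_sum S fun v _ => hint v
  obtain ⟨d, hd, hle⟩ := exists_le_setAverage hD0 hDtop hintS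
  refine ⟨d, hd, ?_⟩
  have havg : ⨍ x in D, (∑ v ∈ S, ‖ZSpan.fract b (v - x)‖ ^ 2) ∂volume
      = (volume D).toReal⁻¹ * (S.card * ∫ x in D, ‖x‖ ^ 2) := by
    rw [setAverage_eq, integral_finset_sum S fun v _ => hint v]
    rw [Finset.sum_congr rfl fun v _ => integral_fract_sub b v, measureReal_def]
    rw [Finset.sum_const, smul_eq_mul, nsmul_eq_mul]
  have hcard : (0 : ℝ) < S.card := by exact_mod_cast Finset.card_pos.mpr hS
  have hvol : (0 : ℝ) < (volume D).toReal := ENNReal.toReal_pos hD0 hDtop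
  rw [havg] at hle
  rw [inv_mul_le_iff₀ hcard]
  calc ∑ v ∈ S, ‖ZSpan.fract b (v - d)‖ ^ 2
      ≤ (volume D).toReal⁻¹ * (S.card * ∫ x in D, ‖x‖ ^ 2) := hle
    _ = S.card * ((volume D).toReal⁻¹ * ∫ x in D, ‖x‖ ^ 2) := by ring
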